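/- Self-adjointness of the Dirac operator under the chirality boundary condition on the half-plane: let ψ = (f₁,g₁) and φ = (f₂,g₂) be compactly supported C¹ spinors on the closed upper half-plane satisfying the chirality boundary condition f₁ + g₁ = 0 and f₂ + g₂ = 0 on ∂ℝ²₊. Then on ∂ℝ²₊ one has pointwise ⟨n·ψ, φ⟩ = 0, where n = −e₂ is Clifford multiplication by the outward unit normal, and consequently ∫_{ℝ²₊} ⟨Dψ, φ⟩ dx = ∫_{ℝ²₊} ⟨ψ, Dφ⟩ dx. -/

import Mathlib

open MeasureTheory Real Filter Topology Set

noncomputable section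

/-- Euclidean norm on `ℝ × ℝ`. -/
def enorm2 (x : ℝ × ℝ) : ℝ := Real.sqrt (x.1 ^ 2 + x.2 ^ 2)

/-- Open disk `D_r` of radius `r` centered at the origin. -/
def Disk (r : ℝ) : Set (ℝ × ℝ) := {x | enorm2 x < r}

/-- Open upper half-disk `D⁺_r`. -/
def DiskP (r : ℝ) : Set (ℝ × ℝ) := {x | enorm2 x < r ∧ 0 < x.2}

/-- Boundary segment `L_r`. -/
def Lseg (r : ℝ) : Set (ℝ × ℝ) := {x | |x.1| < r ∧ x.2 = 0}

/-- The open upper half-plane `ℝ²₊`. -/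
def HalfPlane : Set (ℝ × ℝ) := {x | 0 < x.2}

def origin : ℝ × ℝ := (0, 0)

/-- Partial derivative in the first coordinate direction. -/
def pd1 {E : Type*} [NormedAddCommGroup E] [NormedSpace ℝ E] (f : ℝ × ℝ → E) (x : ℝ × ℝ) : E :=
  deriv (fun t => f (t, x.2)) x.1

/-- Partial derivative in the second coordinate direction. -/
def pd2 {E : Type*} [NormedAddCommGroup E] [NormedSpace ℝ E] (f : ℝ × ℝ → E) (x : ℝ × ℝ) : E :=
  deriv (fun t => f (x.1, t)) x.2

/-- The Laplacian on `ℝ²`. -/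
def lap (u : ℝ × ℝ → ℝ) (x : ℝ × ℝ) : ℝ := pd1 (pd1 u) x + pd2 (pd2 u) x

/-- A spinor on `ℝ²` is a map into `ℂ²`. -/
abbrev Spinor := ℝ × ℝ → ℂ × ℂ

/-- `|Ψ|² = |f|² + |g|²` for a spinor value `Ψ = (f,g)`. -/
def snormSq (a : ℂ × ℂ) : ℝ := Complex.normSq a.1 + Complex.normSq a.2

/-- Hermitian product on `ℂ²`. -/
def sprod (a b : ℂ × ℂ) : ℂ := a.1 * (starRingEnd ℂ) b.1 + a.2 * (starRingEnd ℂ) b.2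

/-- Wirtinger derivative `∂/∂z`. -/
def dz (f : ℝ × ℝ → ℂ) (x : ℝ × ℝ) : ℂ := (1 / 2 : ℂ) * (pd1 f x - Complex.I * pd2 f x)

/-- Wirtinger derivative `∂/∂z̄`. -/
def dzbar (f : ℝ × ℝ → ℂ) (x : ℝ × ℝ) : ℂ := (1 / 2 : ℂ) * (pd1 f x + Complex.I * pd2 f x)

/-- Dirac operator `DΨ = 2i (∂g/∂z, ∂f/∂z̄)` for `Ψ = (f,g)`. -/
def dirac (Ψ : Spinor) (x : ℝ × ℝ) : ℂ × ℂ :=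
  (2 * Complex.I * dz (fun y => (Ψ y).2) x, 2 * Complex.I * dzbar (fun y => (Ψ y).1) x)

/-- Clifford multiplication of a vector `y = (y₁,y₂)` on a spinor value,
given by the matrix `y₁ e₁ + y₂ e₂` with `e₁ = [[0,i],[i,0]]`, `e₂ = [[0,1],[-1,0]]`. -/
def cliff (y : ℝ × ℝ) (a : ℂ × ℂ) : ℂ × ℂ :=
  ((y.1 : ℂ) * Complex.I * a.2 + (y.2 : ℂ) * a.2,
   (y.1 : ℂ) * Complex.I * a.1 - (y.2 : ℂ) * a.1)

/-- The weight `V(x) |x|^α e^{u(x)}`. -/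
def Vw (α : ℝ) (V u : ℝ × ℝ → ℝ) (x : ℝ × ℝ) : ℝ :=
  V x * enorm2 x ^ α * Real.exp (u x)

/-- The boundary value problem (⋆) on `D⁺_r`: the super-Liouville equation coupled with the
Dirac equation in `D⁺_r`, the Neumann condition `∂u/∂n = c V |x|^α e^u` on `L_r`
(the outward normal derivative being `-∂/∂x₂`), and the chirality condition `BΨ = 0` on `L_r`. -/
def StarEqs (α c r : ℝ) (V : ℝ × ℝ → ℝ) (u : ℝ × ℝ → ℝ) (Ψ : Spinor) : Prop :=
  (∀ x ∈ DiskP r, -lap u x = 2 * (Vw α V u x) ^ 2 - Vw α V u x * snormSq (Ψ x)) ∧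
  (∀ x ∈ DiskP r, dirac Ψ x = (-(Vw α V u x)) • Ψ x) ∧
  (∀ x ∈ Lseg r, -pd2 u x = c * Vw α V u x) ∧
  (∀ x ∈ Lseg r, (Ψ x).1 + (Ψ x).2 = 0)

/-- Regularity of a solution: `u ∈ C²(D⁺_r) ∩ C¹(D⁺_r ∪ L_r)`, and the same for `Ψ`. -/
def RegularSolOn (r : ℝ) (u : ℝ × ℝ → ℝ) (Ψ : Spinor) : Prop :=
  ContDiffOn ℝ 2 u (DiskP r) ∧ ContDiffOn ℝ 1 u (DiskP r ∪ Lseg r) ∧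
  ContDiffOn ℝ 2 Ψ (DiskP r) ∧ ContDiffOn ℝ 1 Ψ (DiskP r ∪ Lseg r)

/-- The interior energy density `|x|^{2α} e^{2u} + |Ψ|⁴`. -/
def EnergyIntegrand (α : ℝ) (u : ℝ × ℝ → ℝ) (Ψ : Spinor) (x : ℝ × ℝ) : ℝ :=
  enorm2 x ^ (2 * α) * Real.exp (2 * u x) + (snormSq (Ψ x)) ^ 2

/-- The boundary energy density `|x|^α e^u` along `L_r`. -/
def BdryIntegrand (α : ℝ) (u : ℝ × ℝ → ℝ) (s : ℝ) : ℝ :=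
  |s| ^ α * Real.exp (u (s, 0))

/-- Uniform energy bound `∫_{D⁺_r}(|x|^{2α} e^{2u} + |Ψ|⁴) + ∫_{L_r}|x|^α e^u < C`. -/
def EnergyBound (α r C : ℝ) (u : ℝ × ℝ → ℝ) (Ψ : Spinor) : Prop :=
  IntegrableOn (EnergyIntegrand α u Ψ) (DiskP r) ∧
  IntegrableOn (fun s => BdryIntegrand α u s) (Set.Ioo (-r) r) ∧
  (∫ x in DiskP r, EnergyIntegrand α u Ψ x) +
    (∫ s in Set.Ioo (-r) r, BdryIntegrand α u s) < C

/-- `0 < a ≤ V ≤ b` on `s`. -/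
def VBounds (a b : ℝ) (V : ℝ × ℝ → ℝ) (s : Set (ℝ × ℝ)) : Prop :=
  0 < a ∧ ∀ x ∈ s, a ≤ V x ∧ V x ≤ b

/-- The blow-up set of a sequence of functions in the region `s`. -/
def BlowupSet (w : ℕ → ℝ × ℝ → ℝ) (s : Set (ℝ × ℝ)) : Set (ℝ × ℝ) :=
  {x ∈ s | ∃ y : ℕ → ℝ × ℝ, Tendsto y atTop (nhds x) ∧
    Tendsto (fun n => w n (y n)) atTop atTop}

section DiracAuxiliary

/-- The closed upper half-plane. -/
def SHP : Set (ℝ × ℝ) := {x : ℝ × ℝ | 0 ≤ x.2}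

lemma SHP_uniqueDiffOn : UniqueDiffOn ℝ SHP := by
  have h : SHP = (Set.univ : Set ℝ) ×ˢ Set.Ici (0 : ℝ) := by
    ext x; simp [SHP, Set.mem_prod]
  rw [h]
  exact uniqueDiffOn_univ.prod (uniqueDiffOn_Ici 0)

lemma SHP_closed : IsClosed SHP := isClosed_le continuous_const continuous_snd

lemma SHP_mem_nhds {x : ℝ × ℝ} (hx : 0 < x.2) : SHP ∈ 𝓝 x :=
  mem_nhds_iff.2 ⟨{y : ℝ × ℝ | 0 < y.2}, fun y hy => show (0:ℝ) ≤ y.2 from le_of_lt hy,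
    isOpen_lt continuous_const continuous_snd, hx⟩

lemma pd1_eq_fderiv {f : ℝ × ℝ → ℂ} {x : ℝ × ℝ} (hf : DifferentiableAt ℝ f x) :
    pd1 f x = fderiv ℝ f x (1, 0) :=
  (hf.hasFDerivAt.comp_hasDerivAt x.1
    ((hasDerivAt_id x.1).prodMk (hasDerivAt_const x.1 x.2))).deriv

lemma pd2_eq_fderiv {f : ℝ × ℝ → ℂ} {x : ℝ × ℝ} (hf : DifferentiableAt ℝ f x) :
    pd2 f x = fderiv ℝ f x (0, 1) :=
  (hf.hasFDerivAt.comp_hasDerivAt x.2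
    ((hasDerivAt_const x.2 x.1).prodMk (hasDerivAt_id x.2))).deriv

lemma hasDerivAt_pd1 {f : ℝ × ℝ → ℂ} {x : ℝ × ℝ} (hf : DifferentiableAt ℝ f x) :
    HasDerivAt (fun t => f (t, x.2)) (pd1 f x) x.1 := by
  rw [pd1_eq_fderiv hf]
  exact hf.hasFDerivAt.comp_hasDerivAt x.1
    ((hasDerivAt_id x.1).prodMk (hasDerivAt_const x.1 x.2))

lemma hasDerivAt_pd2 {f : ℝ × ℝ → ℂ} {x : ℝ × ℝ} (hf : DifferentiableAt ℝ f x) :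
    HasDerivAt (fun t => f (x.1, t)) (pd2 f x) x.2 := by
  rw [pd2_eq_fderiv hf]
  exact hf.hasFDerivAt.comp_hasDerivAt x.2
    ((hasDerivAt_const x.2 x.1).prodMk (hasDerivAt_id x.2))

lemma two_I_dz (g : ℝ × ℝ → ℂ) (x : ℝ × ℝ) :
    2 * Complex.I * dz g x = Complex.I * pd1 g x + pd2 g x := by
  rw [dz]; linear_combination (-(pd2 g x)) * Complex.I_sq

lemma two_I_dzbar (g : ℝ × ℝ → ℂ) (x : ℝ × ℝ) :
    2 * Complex.I * dzbar g x = Complex.I * pd1 g x - pd2 g x := by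
  rw [dzbar]; linear_combination (pd2 g x) * Complex.I_sq

lemma starI : star Complex.I = -Complex.I := by
  rw [← starRingEnd_apply]; exact Complex.conj_I

lemma ContDiffOn.starC {f : ℝ × ℝ → ℂ} {s : Set (ℝ × ℝ)} {n : ℕ∞} (hf : ContDiffOn ℝ n f s) :
    ContDiffOn ℝ n (fun x => star (f x)) s := by
  exact (Complex.conjCLE.contDiff.comp_contDiffOn hf).congr
    (fun x _ => rfl)

/-- First component of the flux vector field. -/
def FF1 (ψ φ : Spinor) (x : ℝ × ℝ) : ℂ :=
  Complex.I * ((ψ x).2 * star ((φ x).1) + (ψ x).1 * star ((φ x).2))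

/-- Second component of the flux vector field. -/
def FF2 (ψ φ : Spinor) (x : ℝ × ℝ) : ℂ :=
  (ψ x).2 * star ((φ x).1) - (ψ x).1 * star ((φ x).2)

lemma FF1_contDiffOn {ψ φ : Spinor}
    (hψ : ContDiffOn ℝ 1 ψ SHP) (hφ : ContDiffOn ℝ 1 φ SHP) :
    ContDiffOn ℝ 1 (FF1 ψ φ) SHP :=
  contDiffOn_const.mul ((hψ.snd.mul hφ.fst.starC).add (hψ.fst.mul hφ.snd.starC))

lemma FF2_contDiffOn {ψ φ : Spinor}
    (hψ : ContDiffOn ℝ 1 ψ SHP) (hφ : ContDiffOn ℝ 1 φ SHP) :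
    ContDiffOn ℝ 1 (FF2 ψ φ) SHP :=
  (hψ.snd.mul hφ.fst.starC).sub (hψ.fst.mul hφ.snd.starC)

/-- The (within-)derivative fields used in the divergence theorem. -/
def fP (ψ φ : Spinor) (x : ℝ × ℝ) : ℝ × ℝ →L[ℝ] ℂ := fderivWithin ℝ (FF1 ψ φ) SHP x

def gP (ψ φ : Spinor) (x : ℝ × ℝ) : ℝ × ℝ →L[ℝ] ℂ := fderivWithin ℝ (FF2 ψ φ) SHP x

def dvg (ψ φ : Spinor) (x : ℝ × ℝ) : ℂ := fP ψ φ x (1, 0) + gP ψ φ x (0, 1)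

lemma dvg_continuousOn {ψ φ : Spinor}
    (hψ : ContDiffOn ℝ 1 ψ SHP) (hφ : ContDiffOn ℝ 1 φ SHP) :
    ContinuousOn (dvg ψ φ) SHP := by
  have h1 := (FF1_contDiffOn hψ hφ).continuousOn_fderivWithin SHP_uniqueDiffOn le_rfl
  have h2 := (FF2_contDiffOn hψ hφ).continuousOn_fderivWithin SHP_uniqueDiffOn le_rfl
  exact (h1.clm_apply continuousOn_const).add (h2.clm_apply continuousOn_const)

lemma divergence_eq (ψ φ : Spinor)
    (hψ : ContDiffOn ℝ 1 ψ SHP) (hφ : ContDiffOn ℝ 1 φ SHP)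
    {x : ℝ × ℝ} (hx : 0 < x.2) :
    dvg ψ φ x = sprod (dirac ψ x) (φ x) - sprod (ψ x) (dirac φ x) := by
  have hmem : SHP ∈ 𝓝 x := SHP_mem_nhds hx
  have hψd : DifferentiableAt ℝ ψ x := (hψ.contDiffAt hmem).differentiableAt one_ne_zero
  have hφd : DifferentiableAt ℝ φ x := (hφ.contDiffAt hmem).differentiableAt one_ne_zero
  have h1 : DifferentiableAt ℝ (fun y => (ψ y).1) x := hψd.fst
  have h2 : DifferentiableAt ℝ (fun y => (ψ y).2) x := hψd.snd
  have h3 : DifferentiableAt ℝ (fun y => (φ y).1) x := hφd.fst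
  have h4 : DifferentiableAt ℝ (fun y => (φ y).2) x := hφd.snd
  have hF1d : DifferentiableAt ℝ (FF1 ψ φ) x :=
    (differentiableAt_const _).mul ((h2.mul h3.star).add (h1.mul h4.star))
  have hF2d : DifferentiableAt ℝ (FF2 ψ φ) x := (h2.mul h3.star).sub (h1.mul h4.star)
  have HF1' : HasDerivAt (fun t => FF1 ψ φ (t, x.2)) (fderiv ℝ (FF1 ψ φ) x (1, 0)) x.1 :=
    by have := hF1d.hasFDerivAt.comp_hasDerivAt x.1 ((hasDerivAt_id x.1).prodMk (hasDerivAt_const x.1 x.2)); exact this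
  have HF2' : HasDerivAt (fun t => FF2 ψ φ (x.1, t)) (fderiv ℝ (FF2 ψ φ) x (0, 1)) x.2 :=
    by have := hF2d.hasFDerivAt.comp_hasDerivAt x.2 ((hasDerivAt_const x.2 x.1).prodMk (hasDerivAt_id x.2)); exact this
  have e1 := HF1'.unique
    (HasDerivAt.const_mul Complex.I
      (((hasDerivAt_pd1 h2).mul ((hasDerivAt_pd1 h3).star)).add
        ((hasDerivAt_pd1 h1).mul ((hasDerivAt_pd1 h4).star))))
  have e2 := HF2'.unique
    (((hasDerivAt_pd2 h2).mul ((hasDerivAt_pd2 h3).star)).sub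
      ((hasDerivAt_pd2 h1).mul ((hasDerivAt_pd2 h4).star)))
  have hfw1 : fP ψ φ x = fderiv ℝ (FF1 ψ φ) x := fderivWithin_of_mem_nhds hmem
  have hfw2 : gP ψ φ x = fderiv ℝ (FF2 ψ φ) x := fderivWithin_of_mem_nhds hmem
  rw [dvg, hfw1, hfw2, e1, e2]
  simp only [dirac, two_I_dz, two_I_dzbar, sprod, starRingEnd_apply, star_add, star_sub,
    star_mul', starI, Prod.mk.eta]
  ring

end DiracAuxiliary

/-- self-adjointness of the Dirac operator under the chirality boundary
condition on the half-plane. -/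
theorem dirac_self_adjoint_chirality
    (ψ φ : Spinor)
    (hψ : ContDiffOn ℝ 1 ψ {x : ℝ × ℝ | 0 ≤ x.2}) (hψs : HasCompactSupport ψ)
    (hφ : ContDiffOn ℝ 1 φ {x : ℝ × ℝ | 0 ≤ x.2}) (hφs : HasCompactSupport φ)
    (hBψ : ∀ x : ℝ × ℝ, x.2 = 0 → (ψ x).1 + (ψ x).2 = 0)
    (hBφ : ∀ x : ℝ × ℝ, x.2 = 0 → (φ x).1 + (φ x).2 = 0) :
    (∀ x : ℝ × ℝ, x.2 = 0 → sprod (cliff (0, -1) (ψ x)) (φ x) = 0) ∧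
    (∫ x in HalfPlane, sprod (dirac ψ x) (φ x)) =
      ∫ x in HalfPlane, sprod (ψ x) (dirac φ x) := by
  have hψ' : ContDiffOn ℝ 1 ψ SHP := hψ
  have hφ' : ContDiffOn ℝ 1 φ SHP := hφ
  -- Part 1: the pointwise boundary identity.
  have part1 : ∀ x : ℝ × ℝ, x.2 = 0 → sprod (cliff (0, -1) (ψ x)) (φ x) = 0 := by
    intro x hx
    have e1 : (ψ x).2 = -(ψ x).1 := by linear_combination hBψ x hx
    have e2 : (φ x).2 = -(φ x).1 := by linear_combination hBφ x hx
    simp only [cliff, sprod, e1, e2, map_neg]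
    push_cast
    ring
  refine ⟨part1, ?_⟩
  -- The boundary flux vanishes on the x-axis.
  have hF2bdry : ∀ s : ℝ, FF2 ψ φ (s, 0) = 0 := by
    intro s
    have e1 : (ψ (s, 0)).2 = -(ψ (s, 0)).1 := by linear_combination hBψ (s, 0) rfl
    have e2 : (φ (s, 0)).2 = -(φ (s, 0)).1 := by linear_combination hBφ (s, 0) rfl
    simp only [FF2, e1, e2, star_neg]
    ring
  -- Choose a rectangle containing the supports.
  have hK : IsCompact (tsupport ψ ∪ tsupport φ) := hψs.union hφs
  obtain ⟨R₀, hR₀⟩ := hK.isBounded.subset_ball 0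
  set R : ℝ := max R₀ 1 with hRdef
  have hR1 : (1 : ℝ) ≤ R := le_max_right _ _
  have hR0 : (0 : ℝ) < R := lt_of_lt_of_le one_pos hR1
  have hRR : -R ≤ R := by linarith
  have hKR : tsupport ψ ∪ tsupport φ ⊆ Metric.ball 0 R :=
    hR₀.trans (Metric.ball_subset_ball (le_max_left _ _))
  have hout : ∀ x : ℝ × ℝ, x ∉ tsupport ψ ∪ tsupport φ → ψ x = 0 ∧ φ x = 0 := by
    intro x hxK
    exact ⟨image_eq_zero_of_notMem_tsupport fun h => hxK (Or.inl h),
      image_eq_zero_of_notMem_tsupport fun h => hxK (Or.inr h)⟩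
  have houtR : ∀ x : ℝ × ℝ, R ≤ ‖x‖ → ψ x = 0 ∧ φ x = 0 := by
    intro x hx
    refine hout x fun hmem => ?_
    have := hKR hmem
    rw [mem_ball_zero_iff] at this
    linarith
  have hHPmeas : MeasurableSet HalfPlane :=
    measurableSet_lt measurable_const measurable_snd
  -- Integrability of the two integrands on the half-plane, via continuous "within" versions.
  have hInt : ∀ G : (ℝ × ℝ) → ℂ, ContinuousOn G SHP →
      (∀ x, x ∉ tsupport ψ ∪ tsupport φ → G x = 0) → IntegrableOn G HalfPlane := by
    intro G hG h0
    have hKS : IsCompact (SHP ∩ (tsupport ψ ∪ tsupport φ)) := hK.inter_left SHP_closed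
    have h1 : IntegrableOn G (SHP ∩ (tsupport ψ ∪ tsupport φ)) :=
      (hG.mono Set.inter_subset_left).integrableOn_compact hKS
    have h2 : IntegrableOn G SHP :=
      h1.of_forall_diff_eq_zero SHP_closed.measurableSet
        (fun x hx => h0 x fun hxK => hx.2 ⟨hx.1, hxK⟩)
    exact h2.mono_set fun x hx => show (0:ℝ) ≤ x.2 from le_of_lt hx
  -- continuous-on-SHP surrogates
  set AW : (ℝ × ℝ) → ℂ := fun x =>
    (Complex.I * fderivWithin ℝ (fun y => (ψ y).2) SHP x (1, 0) +
        fderivWithin ℝ (fun y => (ψ y).2) SHP x (0, 1)) * star ((φ x).1) +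
    (Complex.I * fderivWithin ℝ (fun y => (ψ y).1) SHP x (1, 0) -
        fderivWithin ℝ (fun y => (ψ y).1) SHP x (0, 1)) * star ((φ x).2) with hAWdef
  set BW : (ℝ × ℝ) → ℂ := fun x =>
    (ψ x).1 * star (Complex.I * fderivWithin ℝ (fun y => (φ y).2) SHP x (1, 0) +
        fderivWithin ℝ (fun y => (φ y).2) SHP x (0, 1)) +
    (ψ x).2 * star (Complex.I * fderivWithin ℝ (fun y => (φ y).1) SHP x (1, 0) -
        fderivWithin ℝ (fun y => (φ y).1) SHP x (0, 1)) with hBWdef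
  have hAWc : ContinuousOn AW SHP := by
    have c1 := (hψ'.fst.continuousOn_fderivWithin SHP_uniqueDiffOn le_rfl)
    have c2 := (hψ'.snd.continuousOn_fderivWithin SHP_uniqueDiffOn le_rfl)
    exact (((continuousOn_const.mul (c2.clm_apply continuousOn_const)).add
        (c2.clm_apply continuousOn_const)).mul (hφ'.continuousOn.fst.star)).add
      (((continuousOn_const.mul (c1.clm_apply continuousOn_const)).sub
        (c1.clm_apply continuousOn_const)).mul (hφ'.continuousOn.snd.star))
  have hBWc : ContinuousOn BW SHP := by
    have c1 := (hφ'.fst.continuousOn_fderivWithin SHP_uniqueDiffOn le_rfl)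
    have c2 := (hφ'.snd.continuousOn_fderivWithin SHP_uniqueDiffOn le_rfl)
    exact ((hψ'.continuousOn.fst).mul ((((continuousOn_const.mul
        (c2.clm_apply continuousOn_const)).add (c2.clm_apply continuousOn_const))).star)).add
      ((hψ'.continuousOn.snd).mul ((((continuousOn_const.mul
        (c1.clm_apply continuousOn_const)).sub (c1.clm_apply continuousOn_const))).star))
  have hAWeq : ∀ x : ℝ × ℝ, 0 < x.2 → sprod (dirac ψ x) (φ x) = AW x := by
    intro x hx
    have hmem : SHP ∈ 𝓝 x := SHP_mem_nhds hx
    have hψd : DifferentiableAt ℝ ψ x := (hψ'.contDiffAt hmem).differentiableAt one_ne_zero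
    rw [hAWdef]
    simp only [fderivWithin_of_mem_nhds hmem]
    simp only [dirac, two_I_dz, two_I_dzbar, sprod, starRingEnd_apply]
    rw [pd1_eq_fderiv hψd.snd, pd2_eq_fderiv hψd.snd, pd1_eq_fderiv hψd.fst,
      pd2_eq_fderiv hψd.fst]
  have hBWeq : ∀ x : ℝ × ℝ, 0 < x.2 → sprod (ψ x) (dirac φ x) = BW x := by
    intro x hx
    have hmem : SHP ∈ 𝓝 x := SHP_mem_nhds hx
    have hφd : DifferentiableAt ℝ φ x := (hφ'.contDiffAt hmem).differentiableAt one_ne_zero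
    rw [hBWdef]
    simp only [fderivWithin_of_mem_nhds hmem]
    simp only [dirac, two_I_dz, two_I_dzbar, sprod, starRingEnd_apply]
    rw [pd1_eq_fderiv hφd.snd, pd2_eq_fderiv hφd.snd, pd1_eq_fderiv hφd.fst,
      pd2_eq_fderiv hφd.fst]
  have hIA : IntegrableOn (fun x => sprod (dirac ψ x) (φ x)) HalfPlane := by
    have h0 : ∀ x, x ∉ tsupport ψ ∪ tsupport φ → AW x = 0 := by
      intro x hx
      have hφ0 := (hout x hx).2
      simp [hAWdef, hφ0]
    exact (hInt AW hAWc h0).congr_fun (fun x hx => (hAWeq x hx).symm) hHPmeas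
  have hIB : IntegrableOn (fun x => sprod (ψ x) (dirac φ x)) HalfPlane := by
    have h0 : ∀ x, x ∉ tsupport ψ ∪ tsupport φ → BW x = 0 := by
      intro x hx
      have hψ0 := (hout x hx).1
      simp [hBWdef, hψ0]
    exact (hInt BW hBWc h0).congr_fun (fun x hx => (hBWeq x hx).symm) hHPmeas
  -- The divergence vanishes off the supports (inside the open half-plane).
  have hdvg0 : ∀ x : ℝ × ℝ, 0 < x.2 → x ∉ tsupport ψ ∪ tsupport φ → dvg ψ φ x = 0 := by
    intro x hx hxK
    have hop : IsOpen (tsupport ψ ∪ tsupport φ)ᶜ := hK.isClosed.isOpen_compl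
    have hU1 : FF1 ψ φ =ᶠ[nhds x] fun _ => (0 : ℂ) := by
      refine Filter.eventually_of_mem (hop.mem_nhds hxK) fun y hy => ?_
      have h := hout y hy
      simp [FF1, h.1, h.2]
    have hU2 : FF2 ψ φ =ᶠ[nhds x] fun _ => (0 : ℂ) := by
      refine Filter.eventually_of_mem (hop.mem_nhds hxK) fun y hy => ?_
      have h := hout y hy
      simp [FF2, h.1, h.2]
    have hmem : SHP ∈ 𝓝 x := SHP_mem_nhds hx
    have z1 : fP ψ φ x = 0 := by
      rw [fP, fderivWithin_of_mem_nhds hmem, hU1.fderiv_eq]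
      exact fderiv_const_apply 0
    have z2 : gP ψ φ x = 0 := by
      rw [gP, fderivWithin_of_mem_nhds hmem, hU2.fderiv_eq]
      exact fderiv_const_apply 0
    simp [dvg, z1, z2]
  -- The main computation: integral of the divergence over the half-plane is zero.
  have hmain : (∫ x in HalfPlane, sprod (dirac ψ x) (φ x)) -
      ∫ x in HalfPlane, sprod (ψ x) (dirac φ x) = 0 := by
    rw [← integral_sub hIA hIB]
    have hcong : ∀ x ∈ HalfPlane,
        sprod (dirac ψ x) (φ x) - sprod (ψ x) (dirac φ x) = dvg ψ φ x :=
      fun x hx => (divergence_eq ψ φ hψ' hφ' hx).symm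
    rw [setIntegral_congr_fun hHPmeas hcong]
    -- restrict to the rectangle
    have hsub : Set.Ioo (-R) R ×ˢ Set.Ioo 0 R ⊆ HalfPlane := fun x hx => hx.2.1
    have hzero : ∀ x, x ∈ HalfPlane \ Set.Ioo (-R) R ×ˢ Set.Ioo 0 R → dvg ψ φ x = 0 := by
      intro x hx
      refine hdvg0 x hx.1 fun hmem => hx.2 ?_
      have hn := hKR hmem
      rw [mem_ball_zero_iff] at hn
      have h1 : |x.1| < R := lt_of_le_of_lt (by simpa [Real.norm_eq_abs] using norm_fst_le x) hn
      have h2 : |x.2| < R := lt_of_le_of_lt (by simpa [Real.norm_eq_abs] using norm_snd_le x) hn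
      exact ⟨⟨(abs_lt.mp h1).1, (abs_lt.mp h1).2⟩, ⟨hx.1, (abs_lt.mp h2).2⟩⟩
    rw [setIntegral_eq_of_subset_of_ae_diff_eq_zero hHPmeas.nullMeasurableSet hsub
      (Filter.Eventually.of_forall hzero)]
    -- Fubini on the rectangle
    have hQS : Set.Icc (-R) R ×ˢ Set.Icc 0 R ⊆ SHP := fun x hx => hx.2.1
    have hIdvg : IntegrableOn (dvg ψ φ) (Set.Icc (-R) R ×ˢ Set.Icc 0 R) :=
      ((dvg_continuousOn hψ' hφ').mono hQS).integrableOn_compact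
        (isCompact_Icc.prod isCompact_Icc)
    have hIdvg' : IntegrableOn (dvg ψ φ) (Set.Ioo (-R) R ×ˢ Set.Ioo 0 R) :=
      hIdvg.mono_set (Set.prod_mono Set.Ioo_subset_Icc_self Set.Ioo_subset_Icc_self)
    rw [show (volume : Measure (ℝ × ℝ)) = (volume : Measure ℝ).prod volume from rfl]
    rw [setIntegral_prod _ hIdvg']
    have hinner : ∀ a ∈ Set.Ioo (-R) R,
        (∫ y in Set.Ioo (0:ℝ) R, dvg ψ φ (a, y)) = ∫ y in (0:ℝ)..R, dvg ψ φ (a, y) := by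
      intro a _
      rw [intervalIntegral.integral_of_le hR0.le, integral_Ioc_eq_integral_Ioo]
    rw [setIntegral_congr_fun measurableSet_Ioo hinner, ← integral_Ioc_eq_integral_Ioo,
      ← intervalIntegral.integral_of_le hRR]
    -- divergence theorem
    have huIcc1 : Set.uIcc (-R) R = Set.Icc (-R) R := Set.uIcc_of_le hRR
    have huIcc2 : Set.uIcc (0:ℝ) R = Set.Icc 0 R := Set.uIcc_of_le hR0.le
    have hmin1 : min (-R) R = -R := min_eq_left hRR
    have hmax1 : max (-R) R = R := max_eq_right hRR
    have hmin2 : min (0:ℝ) R = 0 := min_eq_left hR0.le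
    have hmax2 : max (0:ℝ) R = R := max_eq_right hR0.le
    have Hcf : ContinuousOn (FF1 ψ φ) (Set.uIcc (-R) R ×ˢ Set.uIcc 0 R) := by
      rw [huIcc1, huIcc2]
      exact (FF1_contDiffOn hψ' hφ').continuousOn.mono hQS
    have Hcg : ContinuousOn (FF2 ψ φ) (Set.uIcc (-R) R ×ˢ Set.uIcc 0 R) := by
      rw [huIcc1, huIcc2]
      exact (FF2_contDiffOn hψ' hφ').continuousOn.mono hQS
    have Hdf : ∀ x ∈ Set.Ioo (min (-R) R) (max (-R) R) ×ˢ
        Set.Ioo (min (0:ℝ) R) (max (0:ℝ) R) \ (∅ : Set (ℝ × ℝ)),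
        HasFDerivAt (FF1 ψ φ) (fP ψ φ x) x := by
      intro x hx
      rw [hmin1, hmax1, hmin2, hmax2] at hx
      have hx2 : 0 < x.2 := hx.1.2.1
      have hmem : SHP ∈ 𝓝 x := SHP_mem_nhds hx2
      have hd : DifferentiableAt ℝ (FF1 ψ φ) x :=
        (((FF1_contDiffOn hψ' hφ').contDiffAt hmem).differentiableAt one_ne_zero)
      have : fP ψ φ x = fderiv ℝ (FF1 ψ φ) x := fderivWithin_of_mem_nhds hmem
      rw [this]
      exact hd.hasFDerivAt
    have Hdg : ∀ x ∈ Set.Ioo (min (-R) R) (max (-R) R) ×ˢ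
        Set.Ioo (min (0:ℝ) R) (max (0:ℝ) R) \ (∅ : Set (ℝ × ℝ)),
        HasFDerivAt (FF2 ψ φ) (gP ψ φ x) x := by
      intro x hx
      rw [hmin1, hmax1, hmin2, hmax2] at hx
      have hx2 : 0 < x.2 := hx.1.2.1
      have hmem : SHP ∈ 𝓝 x := SHP_mem_nhds hx2
      have hd : DifferentiableAt ℝ (FF2 ψ φ) x :=
        (((FF2_contDiffOn hψ' hφ').contDiffAt hmem).differentiableAt one_ne_zero)
      have : gP ψ φ x = fderiv ℝ (FF2 ψ φ) x := fderivWithin_of_mem_nhds hmem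
      rw [this]
      exact hd.hasFDerivAt
    have Hi : IntegrableOn (fun x => fP ψ φ x (1, 0) + gP ψ φ x (0, 1))
        (Set.uIcc (-R) R ×ˢ Set.uIcc 0 R) := by
      rw [huIcc1, huIcc2]
      exact hIdvg
    have hdiv := integral2_divergence_prod_of_hasFDerivAt_off_countable
      (FF1 ψ φ) (FF2 ψ φ) (fP ψ φ) (gP ψ φ) (-R) 0 R R ∅ Set.countable_empty
      Hcf Hcg Hdf Hdg Hi
    have t1 : (∫ x in (-R)..R, FF2 ψ φ (x, R)) = 0 := by
      have hz : ∀ x : ℝ, FF2 ψ φ (x, R) = 0 := by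
        intro x
        have hn : R ≤ ‖((x : ℝ), R)‖ := by
          have := norm_snd_le ((x : ℝ), R)
          simp only [Real.norm_eq_abs] at this
          calc R = |R| := (abs_of_pos hR0).symm
            _ ≤ ‖((x : ℝ), R)‖ := this
        have h := houtR _ hn
        simp [FF2, h.1, h.2]
      simp [hz]
    have t2 : (∫ x in (-R)..R, FF2 ψ φ (x, 0)) = 0 := by simp [hF2bdry]
    have t3 : (∫ y in (0:ℝ)..R, FF1 ψ φ (R, y)) = 0 := by
      have hz : ∀ y : ℝ, FF1 ψ φ (R, y) = 0 := by
        intro y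
        have hn : R ≤ ‖((R : ℝ), y)‖ := by
          have := norm_fst_le ((R : ℝ), y)
          simp only [Real.norm_eq_abs] at this
          calc R = |R| := (abs_of_pos hR0).symm
            _ ≤ ‖((R : ℝ), y)‖ := this
        have h := houtR _ hn
        simp [FF1, h.1, h.2]
      simp [hz]
    have t4 : (∫ y in (0:ℝ)..R, FF1 ψ φ (-R, y)) = 0 := by
      have hz : ∀ y : ℝ, FF1 ψ φ (-R, y) = 0 := by
        intro y
        have hn : R ≤ ‖((-R : ℝ), y)‖ := by
          have := norm_fst_le ((-R : ℝ), y)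
          simp only [Real.norm_eq_abs, abs_neg] at this
          calc R = |R| := (abs_of_pos hR0).symm
            _ ≤ ‖((-R : ℝ), y)‖ := this
        have h := houtR _ hn
        simp [FF1, h.1, h.2]
      simp [hz]
    calc (∫ x in (-R)..R, ∫ y in (0:ℝ)..R, dvg ψ φ (x, y))
        = ∫ x in (-R)..R, ∫ y in (0:ℝ)..R, (fP ψ φ (x, y) (1, 0) + gP ψ φ (x, y) (0, 1)) := rfl
      _ = (((∫ x in (-R)..R, FF2 ψ φ (x, R)) - ∫ x in (-R)..R, FF2 ψ φ (x, 0)) +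
            ∫ y in (0:ℝ)..R, FF1 ψ φ (R, y)) - ∫ y in (0:ℝ)..R, FF1 ψ φ (-R, y) := hdiv
      _ = 0 := by rw [t1, t2, t3, t4]; simp
  exact sub_eq_zero.mp hmain
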